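/- Let p be a prime, let G be a finite p-group, and let d be an integer with 2 ≤ d ≤ p−1. If γ_{d+2}(G) ≤ (G')^p, then γ_{p−1}(G') ≤ (G')^p; that is, G' is potent. -/

import Mathlib

/-!
STATEMENT 13: Let p be a prime, let G be a finite p-group, and let d be an
integer with 2 ≤ d ≤ p−1.  If γ_{d+2}(G) ≤ (G')^p, then γ_{p−1}(G') ≤ (G')^p;
that is, G' is potent.

Here γ_j(G) = (⊤ : Subgroup G).lowerCentralSeries (j-1), (G')^p = `sgPow (commutator G) p`,
and γ_{p-1}(G') is the (p-1)-st term of the lower central series of the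
subgroup G' computed inside G, namely `lcsIn (commutator G) (p - 2)` where
`lcsIn H j` is defined by lcsIn H 0 = H and lcsIn H (j+1) = ⁅lcsIn H j, H⁆.
-/

/-- The subgroup `⟨h^n : h ∈ H⟩` generated by the `n`-th powers of elements of `H`. -/
def sgPow {G : Type*} [Group G] (H : Subgroup G) (n : ℕ) : Subgroup G :=
  Subgroup.closure ((· ^ n) '' (H : Set G))

/-- The lower central series of the subgroup `H`, computed inside `G`:
`lcsIn H j` is γ_{j+1}(H) as a subgroup of `G`. -/
def lcsIn {G : Type*} [Group G] (H : Subgroup G) : ℕ → Subgroup G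
  | 0 => H
  | j + 1 => ⁅lcsIn H j, H⁆

/-- Three subgroups lemma, relative to a normal subgroup. -/
theorem three_subgroups_le {G : Type*} [Group G] {H₁ H₂ H₃ N : Subgroup G} [N.Normal]
    (h1 : ⁅⁅H₂, H₃⁆, H₁⁆ ≤ N) (h2 : ⁅⁅H₃, H₁⁆, H₂⁆ ≤ N) : ⁅⁅H₁, H₂⁆, H₃⁆ ≤ N := by
  let f := QuotientGroup.mk' N
  have key : ∀ A B : Subgroup G, ⁅A, B⁆ ≤ N ↔ ⁅A.map f, B.map f⁆ = ⊥ := by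
    intro A B
    rw [← Subgroup.map_commutator, Subgroup.map_eq_bot_iff, QuotientGroup.ker_mk']
  rw [key] at h1 h2 ⊢
  rw [Subgroup.map_commutator] at h1 h2 ⊢
  exact Subgroup.commutator_commutator_eq_bot_of_rotate h1 h2

theorem lcs_commutator_lcs_le {G : Type*} [Group G] (n m : ℕ) :
    ⁅(⊤ : Subgroup G).lowerCentralSeries m, (⊤ : Subgroup G).lowerCentralSeries n⁆ ≤ (⊤ : Subgroup G).lowerCentralSeries (m + n + 1) := by
  induction n generalizing m with
  | zero =>
    rw [Subgroup.lowerCentralSeries_zero]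
    exact le_of_eq (rfl : (⊤ : Subgroup G).lowerCentralSeries (m + 1) = ⁅(⊤ : Subgroup G).lowerCentralSeries m, ⊤⁆).symm
  | succ n ih =>
    rw [Subgroup.commutator_comm, Subgroup.lowerCentralSeries_succ]
    refine three_subgroups_le ?_ ?_
    · calc ⁅⁅(⊤ : Subgroup G), (⊤ : Subgroup G).lowerCentralSeries m⁆, (⊤ : Subgroup G).lowerCentralSeries n⁆
          = ⁅⁅(⊤ : Subgroup G).lowerCentralSeries m, (⊤ : Subgroup G)⁆, (⊤ : Subgroup G).lowerCentralSeries n⁆ := by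
            rw [Subgroup.commutator_comm ((⊤ : Subgroup G).lowerCentralSeries m)]
        _ = ⁅(⊤ : Subgroup G).lowerCentralSeries (m + 1), (⊤ : Subgroup G).lowerCentralSeries n⁆ := rfl
        _ ≤ (⊤ : Subgroup G).lowerCentralSeries (m + 1 + n + 1) := ih (m + 1)
        _ = (⊤ : Subgroup G).lowerCentralSeries (m + (n + 1) + 1) := by ring_nf
    · calc ⁅⁅(⊤ : Subgroup G).lowerCentralSeries m, (⊤ : Subgroup G).lowerCentralSeries n⁆, (⊤ : Subgroup G)⁆
          ≤ ⁅(⊤ : Subgroup G).lowerCentralSeries (m + n + 1), (⊤ : Subgroup G)⁆ :=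
            Subgroup.commutator_mono (ih m) le_rfl
        _ = (⊤ : Subgroup G).lowerCentralSeries (m + n + 2) := rfl
        _ = (⊤ : Subgroup G).lowerCentralSeries (m + (n + 1) + 1) := by ring_nf

theorem lcsIn_commutator_le {G : Type*} [Group G] (j : ℕ) :
    lcsIn (commutator G) j ≤ (⊤ : Subgroup G).lowerCentralSeries (2 * j + 1) := by
  induction j with
  | zero => exact le_of_eq Subgroup.top_lowerCentralSeries_one.symm
  | succ j ih =>
    calc lcsIn (commutator G) (j + 1) = ⁅lcsIn (commutator G) j, commutator G⁆ := rfl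
      _ ≤ ⁅(⊤ : Subgroup G).lowerCentralSeries (2 * j + 1), (⊤ : Subgroup G).lowerCentralSeries 1⁆ :=
          Subgroup.commutator_mono ih (le_of_eq Subgroup.top_lowerCentralSeries_one)
      _ ≤ (⊤ : Subgroup G).lowerCentralSeries (2 * j + 1 + 1 + 1) := lcs_commutator_lcs_le 1 (2 * j + 1)
      _ = (⊤ : Subgroup G).lowerCentralSeries (2 * (j + 1) + 1) := by ring_nf

theorem derived_subgroup_potent
    {p : ℕ} (hp : p.Prime)
    {G : Type*} [Group G] [Finite G] (hG : IsPGroup p G)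
    (d : ℕ) (hd2 : 2 ≤ d) (hdp : d ≤ p - 1)
    (hγ : (⊤ : Subgroup G).lowerCentralSeries (d + 1) ≤ sgPow (commutator G) p) :
    lcsIn (commutator G) (p - 2) ≤ sgPow (commutator G) p := by
  have hp3 : 3 ≤ p := by omega
  calc lcsIn (commutator G) (p - 2) ≤ (⊤ : Subgroup G).lowerCentralSeries (2 * (p - 2) + 1) :=
        lcsIn_commutator_le _
    _ ≤ (⊤ : Subgroup G).lowerCentralSeries (d + 1) := Subgroup.lowerCentralSeries_antitone _ (by omega)
    _ ≤ sgPow (commutator G) p := hγ
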